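/- arXiv:2002.08941 — 3 statements merged into one kernel-verified Lean document; each statement's English description precedes it below -/
import Mathlib

section
/- Let m > 0 and for r > m/2 set V(r) = ∫_{{x ∈ ℝ³ : m/2 ≤ |x| ≤ r}} (1 + m/(2|x|))⁶ dx (the Schwarzschild volume of the coordinate ball of radius r). Then there exist constants C > 0 and r₀ > m/2 such that for all r ≥ r₀, | (3V(r)/(4π))^{1/3} − r − 3m/2 | ≤ C/r. In particular (3V(r)/(4π))^{1/3} = r + 3m/2 + O(r^{−1}) as r → ∞. -/
noncomputable section

open MeasureTheory Filter Topology Real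

abbrev E3 : Type := EuclideanSpace ℝ (Fin 3)

/-- The `i`-th partial derivative (the gradient is defined a.e. for locally Lipschitz
functions; `fderiv` takes the junk value `0` where `ψ` is not differentiable). -/
def pd (ψ : E3 → ℝ) (i : Fin 3) (x : E3) : ℝ :=
  fderiv ℝ ψ x (EuclideanSpace.single i 1)

/-- `ψ` is locally Lipschitz on the set `S`. -/
def LocLipOn (S : Set E3) (ψ : E3 → ℝ) : Prop :=
  ∀ x ∈ S, ∃ (C : NNReal) (t : Set E3), t ∈ 𝓝[S] x ∧ LipschitzOnWith C ψ t

/-- The `g`-volume of a set `K`, `∫_K √(det g(x)) dx`. -/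
def gVol (g : E3 → Matrix (Fin 3) (Fin 3) ℝ) (K : Set E3) : ℝ :=
  ∫ x in K, Real.sqrt (g x).det

/-- The `g`-Dirichlet energy `(1/(4π)) ∫_S ∑ g^{ij} ∂_iψ ∂_jψ √(det g) dx`. -/
def gEnergyOn (S : Set E3) (g : E3 → Matrix (Fin 3) (Fin 3) ℝ) (ψ : E3 → ℝ) : ℝ :=
  (1 / (4 * π)) *
    ∫ x in S, (∑ i, ∑ j, (g x)⁻¹ i j * pd ψ i x * pd ψ j x) * Real.sqrt (g x).det

/-- The `g`-capacity of a compact set `K`, relative to the domain `S`: the infimum of the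
normalized `g`-Dirichlet energy over locally Lipschitz test functions on `S` vanishing on `K`
and tending to `1` at infinity. -/
def gCapOn (S : Set E3) (g : E3 → Matrix (Fin 3) (Fin 3) ℝ) (K : Set E3) : ℝ :=
  sInf { e | ∃ ψ : E3 → ℝ, LocLipOn S ψ ∧ (∀ x ∈ K, ψ x = 0) ∧
    Tendsto ψ (cocompact E3 ⊓ 𝓟 S) (𝓝 1) ∧ e = gEnergyOn S g ψ }

/-- The `g`-capacity of a compact set `K ⊆ ℝ³`. -/
def gCap (g : E3 → Matrix (Fin 3) (Fin 3) ℝ) (K : Set E3) : ℝ :=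
  gCapOn Set.univ g K

/-- `K` is an exhaustion of `S` by compact sets: each `K j` is compact, contained in the
interior of `K (j+1)` relative to `S`, and `⋃ j, K j = S`. -/
def IsExhaustion (S : Set E3) (K : ℕ → Set E3) : Prop :=
  (∀ j, IsCompact (K j) ∧ K j ⊆ S) ∧
  (∀ j, ∃ U : Set E3, IsOpen U ∧ K j ⊆ U ∩ S ∧ U ∩ S ⊆ K (j + 1)) ∧
  (⋃ j, K j) = S

/-- `g` is a continuous Riemannian metric on `ℝ³` that is `C⁰`-asymptotically flat. -/
def IsC0AF (g : E3 → Matrix (Fin 3) (Fin 3) ℝ) : Prop :=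
  (∀ i j, Continuous fun x => g x i j) ∧ (∀ x, (g x).IsSymm ∧ (g x).PosDef) ∧
  ∃ q > (0:ℝ), ∃ C > (0:ℝ), ∃ R > (0:ℝ), ∀ x : E3, R ≤ ‖x‖ → ∀ i j,
    |g x i j - (1 : Matrix (Fin 3) (Fin 3) ℝ) i j| ≤ C * ‖x‖ ^ (-q)


namespace SchwarzVol

open Set Metric

def Fm (m : ℝ) (s : ℝ) : ℝ :=
  s^3/3 + (3*m/2)*s^2 + (15*m^2/4)*s + (5*m^3/2)*Real.log s
    - (15*m^4/16)*s⁻¹ - (3*m^5/32)*(s^2)⁻¹ - (m^6/192)*(s^3)⁻¹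

lemma ball_vol : (volume (ball (0:E3) 1)).toReal = 4 * π / 3 := by
  rw [EuclideanSpace.volume_ball]
  have hc : (Fintype.card (Fin 3) : ℕ) = 3 := by simp
  rw [hc]
  have hG : Real.Gamma ((3:ℝ)/2 + 1) = 3/4 * Real.sqrt π := by
    rw [Real.Gamma_add_one (by norm_num)]
    have : (3:ℝ)/2 = 1/2 + 1 := by norm_num
    rw [this, Real.Gamma_add_one (by norm_num), Real.Gamma_one_half_eq]
    ring
  have hs : Real.sqrt π > 0 := Real.sqrt_pos.mpr Real.pi_pos
  have : Real.sqrt π ^ 3 / Real.Gamma ((3:ℝ)/2 + 1) = 4 * π / 3 := by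
    rw [hG]
    have h2 : Real.sqrt π ^ 2 = π := Real.sq_sqrt Real.pi_pos.le
    field_simp
    nlinarith [h2, hs]
  rw [show ((3:ℕ):ℝ)/2 + 1 = (3:ℝ)/2 + 1 by norm_num] at *
  rw [ENNReal.toReal_mul]
  simp [this]
  positivity

lemma radial (m r : ℝ) (hm : 0 < m) (hr : m/2 ≤ r) :
    (∫ x in {x : E3 | m / 2 ≤ ‖x‖ ∧ ‖x‖ ≤ r}, (1 + m / (2 * ‖x‖)) ^ 6)
      = 4 * π * ∫ s in (m/2)..r, s^2 * (1 + m / (2*s)) ^ 6 := by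
  set g : ℝ → ℝ := fun s => (1 + m / (2*s)) ^ 6 with hg
  have hset : {x : E3 | m / 2 ≤ ‖x‖ ∧ ‖x‖ ≤ r} = (fun x : E3 => ‖x‖) ⁻¹' (Icc (m/2) r) := by
    ext x; simp [Icc]
  have hmeas : MeasurableSet {x : E3 | m / 2 ≤ ‖x‖ ∧ ‖x‖ ≤ r} := by
    rw [hset]; exact (measurableSet_Icc).preimage (continuous_norm.measurable)
  have h1 : (∫ x in {x : E3 | m / 2 ≤ ‖x‖ ∧ ‖x‖ ≤ r}, (1 + m / (2 * ‖x‖)) ^ 6)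
      = ∫ x : E3, (Icc (m/2) r).indicator g ‖x‖ := by
    rw [← integral_indicator hmeas]
    refine integral_congr_ae (Filter.Eventually.of_forall fun x => ?_)
    rw [hset]
    exact Set.indicator_comp_right (s := Icc (m/2) r) (g := g) (fun x : E3 => ‖x‖)
  rw [h1, integral_fun_norm_addHaar volume (fun y => (Icc (m/2) r).indicator g y)]
  have hdim : Module.finrank ℝ E3 = 3 := finrank_euclideanSpace_fin
  rw [hdim, measureReal_def, ball_vol]
  have h2 : (∫ y in Ioi (0:ℝ), y ^ (3-1) • (Icc (m/2) r).indicator g y)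
      = ∫ s in (m/2)..r, s^2 * g s := by
    have : ∀ y : ℝ, y ^ (3-1) • (Icc (m/2) r).indicator g y
        = (Icc (m/2) r).indicator (fun s => s^2 * g s) y := by
      intro y
      by_cases hy : y ∈ Icc (m/2) r <;>
        simp [Set.indicator_of_mem, Set.indicator_of_notMem, hy, smul_eq_mul]
    simp_rw [this]
    rw [setIntegral_indicator measurableSet_Icc]
    have hsub : Ioi (0:ℝ) ∩ Icc (m/2) r = Icc (m/2) r := by
      apply inter_eq_self_of_subset_right
      intro y hy
      exact lt_of_lt_of_le (by linarith) hy.1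
    rw [hsub, intervalIntegral.integral_of_le hr, ← integral_Icc_eq_integral_Ioc]
  rw [h2]
  simp only [nsmul_eq_mul, smul_eq_mul]
  ring

lemma deriv_Fm (m s : ℝ) (hs : 0 < s) :
    HasDerivAt (Fm m) (s^2 * (1 + m/(2*s))^6) s := by
  have hs' : s ≠ 0 := ne_of_gt hs
  have h :=
    (((((((hasDerivAt_pow 3 s).div_const 3).add
      ((hasDerivAt_pow 2 s).const_mul (3*m/2))).add
      ((hasDerivAt_id s).const_mul (15*m^2/4))).add
      ((Real.hasDerivAt_log hs').const_mul (5*m^3/2))).sub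
      (((hasDerivAt_id s).inv hs').const_mul (15*m^4/16))).sub
      (((hasDerivAt_pow 2 s).inv (pow_ne_zero 2 hs')).const_mul (3*m^5/32))).sub
      (((hasDerivAt_pow 3 s).inv (pow_ne_zero 3 hs')).const_mul (m^6/192))
  refine h.congr_deriv ?_
  simp only [id]
  field_simp
  ring

lemma oneD (m r : ℝ) (hm : 0 < m) (hr : m/2 ≤ r) :
    ∫ s in (m/2)..r, s^2 * (1 + m/(2*s))^6 = Fm m r - Fm m (m/2) := by
  apply intervalIntegral.integral_eq_sub_of_hasDerivAt
  · intro x hx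
    rw [uIcc_of_le hr] at hx
    exact deriv_Fm m x (lt_of_lt_of_le (half_pos hm) hx.1)
  · apply ContinuousOn.intervalIntegrable
    have hne : ∀ x ∈ uIcc (m/2) r, 2 * x ≠ 0 := by
      intro x hx
      rw [uIcc_of_le hr] at hx
      have : 0 < x := lt_of_lt_of_le (half_pos hm) hx.1
      positivity
    exact (continuousOn_id.pow 2).mul ((continuousOn_const.add
      (continuousOn_const.div ((continuous_const.mul continuous_id).continuousOn) hne)).pow 6)

lemma cube_rt (x : ℝ) (hx : 0 ≤ x) : (x^3 : ℝ)^((1:ℝ)/3) = x := by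
  rw [← Real.rpow_natCast x 3, ← Real.rpow_mul hx]
  norm_num

lemma cube_upper (m r ε : ℝ) (hm : 0 < m) (hr : 0 < r) (hε : 0 ≤ ε)
    (hc : 13*m^2/2 ≤ ε*r) :
    r^3 + (9*m/2)*r^2 + (45*m^2/4)*r + (15*m^2)*r ≤ (r + 3*m/2 + ε)^3 := by
  nlinarith [mul_le_mul_of_nonneg_left hc (by positivity : (0:ℝ) ≤ 3*r),
    mul_nonneg (mul_nonneg hε hm.le) hr.le, mul_nonneg (mul_nonneg hε hm.le) hm.le,
    mul_nonneg (mul_nonneg hε hε) hr.le, mul_nonneg (mul_nonneg hε hε) hm.le,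
    mul_nonneg (mul_nonneg hε hε) hε, hm.le, hr.le]

set_option maxHeartbeats 1000000 in
lemma est (m r : ℝ) (hm : 0 < m) (hr : 3*m + 1 ≤ r) :
    |(3*(Fm m r - Fm m (m/2)))^((1:ℝ)/3) - r - 3*m/2| ≤ (13*m^2/2)/r := by
  have hrpos : 0 < r := by linarith
  have hbpos : 0 < m/2 := by linarith
  have h3m : 3*m ≤ r := by linarith
  have h9 : 9*m^2 ≤ r^2 := by nlinarith
  have h27 : 27*m^3 ≤ r^3 := by nlinarith
  have h81 : 81*m^4 ≤ r^4 := by nlinarith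
  have hFb : Fm m (m/2) = (5*m^3/2) * Real.log (m/2) := by
    unfold Fm
    have hm' : m ≠ 0 := ne_of_gt hm
    field_simp
    ring
  have hL0 : 0 ≤ Real.log r - Real.log (m/2) := by
    have : Real.log (m/2) ≤ Real.log r := Real.log_le_log hbpos (by linarith)
    linarith
  have hLm : m * (Real.log r - Real.log (m/2)) ≤ 2*r := by
    have h1 : Real.log r - Real.log (m/2) = Real.log (r / (m/2)) := by
      rw [Real.log_div (ne_of_gt hrpos) (ne_of_gt hbpos)]
    have h2 : Real.log r - Real.log (m/2) ≤ r/(m/2) - 1 := by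
      rw [h1]; exact Real.log_le_sub_one_of_pos (div_pos hrpos hbpos)
    have h5 : r/(m/2) = 2*r/m := by
      rw [div_eq_div_iff (ne_of_gt hbpos) (ne_of_gt hm)]; ring
    have h7 : Real.log r - Real.log (m/2) ≤ 2*r/m := by
      rw [h5] at h2; linarith [le_trans h2 (by linarith : 2*r/m - 1 ≤ 2*r/m)]
    calc m * (Real.log r - Real.log (m/2)) ≤ m * (2*r/m) :=
          mul_le_mul_of_nonneg_left h7 hm.le
      _ = 2*r := by field_simp
  have hQeq : 3*(Fm m r - Fm m (m/2)) = r^3 + (9*m/2)*r^2 + (45*m^2/4)*r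
      + (15*m^3/2)*(Real.log r - Real.log (m/2))
      - (45*m^4/16)*r⁻¹ - (9*m^5/32)*(r^2)⁻¹ - (m^6/64)*(r^3)⁻¹ := by
    rw [hFb]
    unfold Fm
    ring
  have hiv1 : (45*m^4/16)*r⁻¹ ≤ m^2*r := by
    rw [← div_eq_mul_inv, div_le_iff₀ hrpos]
    nlinarith [mul_le_mul_of_nonneg_left h9 (sq_nonneg m)]
  have hiv2 : (9*m^5/32)*(r^2)⁻¹ ≤ m^2*r := by
    rw [← div_eq_mul_inv, div_le_iff₀ (by positivity : (0:ℝ) < r^2)]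
    nlinarith [mul_le_mul_of_nonneg_left h27 (sq_nonneg m), pow_nonneg hm.le 5]
  have hiv3 : (m^6/64)*(r^3)⁻¹ ≤ m^2*r := by
    rw [← div_eq_mul_inv, div_le_iff₀ (by positivity : (0:ℝ) < r^3)]
    nlinarith [mul_le_mul_of_nonneg_left h81 (sq_nonneg m), pow_nonneg hm.le 6]
  have hiv1' : 0 ≤ (45*m^4/16)*r⁻¹ := by positivity
  have hiv2' : 0 ≤ (9*m^5/32)*(r^2)⁻¹ := by positivity
  have hiv3' : 0 ≤ (m^6/64)*(r^3)⁻¹ := by positivity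
  have hε0 : 0 ≤ (13*m^2/2)/r := by positivity
  have hεr : ((13*m^2/2)/r) * r = 13*m^2/2 := div_mul_cancel₀ _ (ne_of_gt hrpos)
  have hεle : (13*m^2/2)/r ≤ r := by
    rw [div_le_iff₀ hrpos]
    nlinarith
  have hlow0 : 0 ≤ r + 3*m/2 - (13*m^2/2)/r := by linarith
  have hmidlow : (r + 3*m/2)^3 ≤ 3*(Fm m r - Fm m (m/2)) := by
    rw [hQeq]
    have hmlL : 0 ≤ (15*m^3/2)*(Real.log r - Real.log (m/2)) := by positivity
    have hkey : m^2*(3*m) ≤ m^2*r := mul_le_mul_of_nonneg_left h3m (sq_nonneg m)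
    have hcube : (r + 3*m/2)^3 = r^3 + (9*m/2)*r^2 + (27*m^2/4)*r + 27*m^3/8 := by ring
    linarith [hiv1, hiv2, hiv3, hmlL, hkey, hcube]
  have hlow : (r + 3*m/2 - (13*m^2/2)/r)^3 ≤ 3*(Fm m r - Fm m (m/2)) :=
    le_trans (pow_le_pow_left₀ hlow0 (by linarith) 3) hmidlow
  have hup : 3*(Fm m r - Fm m (m/2)) ≤ (r + 3*m/2 + (13*m^2/2)/r)^3 := by
    have h1 : 3*(Fm m r - Fm m (m/2)) ≤ r^3 + (9*m/2)*r^2 + (45*m^2/4)*r + (15*m^2)*r := by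
      rw [hQeq]
      linarith [mul_le_mul_of_nonneg_left hLm (show (0:ℝ) ≤ 15*m^2/2 by positivity),
        hiv1', hiv2', hiv3']
    exact le_trans h1 (cube_upper m r _ hm hrpos hε0 (le_of_eq hεr.symm))
  have hQ0 : 0 ≤ 3*(Fm m r - Fm m (m/2)) := le_trans (pow_nonneg hlow0 3) hlow
  have hrt1 : r + 3*m/2 - (13*m^2/2)/r ≤ (3*(Fm m r - Fm m (m/2)))^((1:ℝ)/3) := by
    have := Real.rpow_le_rpow (pow_nonneg hlow0 3) hlow (by norm_num : (0:ℝ) ≤ 1/3)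
    rwa [cube_rt _ hlow0] at this
  have hrt2 : (3*(Fm m r - Fm m (m/2)))^((1:ℝ)/3) ≤ r + 3*m/2 + (13*m^2/2)/r := by
    have := Real.rpow_le_rpow hQ0 hup (by norm_num : (0:ℝ) ≤ 1/3)
    rwa [cube_rt _ (by linarith)] at this
  rw [abs_le]
  constructor <;> linarith

end SchwarzVol

/-- **Volume radius expansion in Schwarzschild.** For `m > 0` and
`V(r) = ∫_{m/2 ≤ |x| ≤ r} (1 + m/(2|x|))⁶ dx`, one has
`(3V(r)/(4π))^{1/3} = r + 3m/2 + O(r⁻¹)` as `r → ∞`. -/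
theorem schwarzschild_volume_radius_expansion (m : ℝ) (hm : 0 < m) :
    ∃ C > (0 : ℝ), ∃ r₀ > m / 2, ∀ r ≥ r₀,
      |(3 * (∫ x in {x : E3 | m / 2 ≤ ‖x‖ ∧ ‖x‖ ≤ r}, (1 + m / (2 * ‖x‖)) ^ 6) / (4 * π))
          ^ ((1 : ℝ) / 3) - r - 3 * m / 2| ≤ C / r := by
  refine ⟨13*m^2/2, by positivity, 3*m + 1, by linarith, fun r hr => ?_⟩
  have hr2 : m/2 ≤ r := by linarith
  rw [SchwarzVol.radial m r hm hr2, SchwarzVol.oneD m r hm hr2]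
  have hπ : (4:ℝ)*π ≠ 0 := by positivity
  have hdiv : 3 * (4*π*(SchwarzVol.Fm m r - SchwarzVol.Fm m (m/2))) / (4*π)
      = 3*(SchwarzVol.Fm m r - SchwarzVol.Fm m (m/2)) := by
    field_simp
  rw [hdiv]
  exact SchwarzVol.est m r hm hr
end
end

section
/- Let g₁ and g₂ be continuous Riemannian metrics on ℝ³ and Λ ≥ 1 a constant with Λ^{−2} g₂(x) ≤ g₁(x) ≤ Λ² g₂(x) as quadratic forms for every x ∈ ℝ³. Then for every compact set K ⊆ ℝ³: Λ^{−3} |K|_{g₂} ≤ |K|_{g₁} ≤ Λ³ |K|_{g₂}, and Λ^{−3} cap_{g₂}(K) ≤ cap_{g₁}(K) ≤ Λ³ cap_{g₂}(K). -/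
noncomputable section

open MeasureTheory Filter Topology Real

section Core
open Matrix

/-- quadratic form -/
def Qf (M : Matrix (Fin 3) (Fin 3) ℝ) (v : Fin 3 → ℝ) : ℝ := ∑ i, ∑ j, M i j * v i * v j
/-- bilinear form -/
def Bf (M : Matrix (Fin 3) (Fin 3) ℝ) (u w : Fin 3 → ℝ) : ℝ := ∑ i, ∑ j, M i j * u i * w j

lemma Qf_eq_dot (M : Matrix (Fin 3) (Fin 3) ℝ) (v : Fin 3 → ℝ) :
    Qf M v = dotProduct v (M *ᵥ v) := by
  simp only [Qf, dotProduct, Matrix.mulVec, dotProduct, Fin.sum_univ_three]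
  ring

lemma Qf_nonneg {M : Matrix (Fin 3) (Fin 3) ℝ} (hM : M.PosDef) (v : Fin 3 → ℝ) :
    0 ≤ Qf M v := by
  rw [Qf_eq_dot]
  simpa using hM.posSemidef.dotProduct_mulVec_nonneg v

lemma Qf_pos {M : Matrix (Fin 3) (Fin 3) ℝ} (hM : M.PosDef) {v : Fin 3 → ℝ} (hv : v ≠ 0) :
    0 < Qf M v := by
  rw [Qf_eq_dot]
  simpa using hM.dotProduct_mulVec_pos hv

lemma Bf_self (M : Matrix (Fin 3) (Fin 3) ℝ) (v : Fin 3 → ℝ) : Bf M v v = Qf M v := rfl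

lemma Bf_symm {M : Matrix (Fin 3) (Fin 3) ℝ} (hM : M.IsSymm) (u w : Fin 3 → ℝ) :
    Bf M u w = Bf M w u := by
  have h : ∀ i j, M i j = M j i := fun i j => by
    conv_lhs => rw [← hM]
    rfl
  simp only [Bf, Fin.sum_univ_three, h 1 0, h 2 0, h 2 1]
  ring

lemma Qf_expand {M : Matrix (Fin 3) (Fin 3) ℝ} (hM : M.IsSymm) (u w : Fin 3 → ℝ) (a t : ℝ) :
    Qf M (a • u - t • w) = a^2 * Qf M u - 2*a*t * Bf M u w + t^2 * Qf M w := by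
  have h : ∀ i j, M i j = M j i := fun i j => by
    conv_lhs => rw [← hM]
    rfl
  simp only [Qf, Bf, Fin.sum_univ_three, Pi.sub_apply, Pi.smul_apply, smul_eq_mul,
    h 1 0, h 2 0, h 2 1]
  ring

lemma Bf_sub_smul (M : Matrix (Fin 3) (Fin 3) ℝ) (u w z : Fin 3 → ℝ) (a t : ℝ) :
    Bf M (a • u - t • w) z = a * Bf M u z - t * Bf M w z := by
  simp only [Bf, Fin.sum_univ_three, Pi.sub_apply, Pi.smul_apply, smul_eq_mul]
  ring

lemma Qf_smul (M : Matrix (Fin 3) (Fin 3) ℝ) (u : Fin 3 → ℝ) (a : ℝ) :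
    Qf M (a • u) = a^2 * Qf M u := by
  simp only [Qf, Fin.sum_univ_three, Pi.smul_apply, smul_eq_mul]; ring

/-- Cauchy-Schwarz for a positive definite symmetric quadratic form -/
lemma Bf_sq_le {M : Matrix (Fin 3) (Fin 3) ℝ} (hM : M.PosDef) (hMs : M.IsSymm)
    (u w : Fin 3 → ℝ) : (Bf M u w)^2 ≤ Qf M u * Qf M w := by
  rcases eq_or_ne w 0 with rfl | hw
  · simp [Bf, Qf]
  · have hq : 0 < Qf M w := Qf_pos hM hw
    have h0 : 0 ≤ Qf M (Qf M w • u - Bf M u w • w) := Qf_nonneg hM _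
    rw [Qf_expand hMs] at h0
    nlinarith [sq_nonneg (Bf M u w)]

lemma Bf_eq_dot (M : Matrix (Fin 3) (Fin 3) ℝ) (u w : Fin 3 → ℝ) :
    Bf M u w = dotProduct u (M *ᵥ w) := by
  simp only [Bf, dotProduct, Matrix.mulVec, dotProduct, Fin.sum_univ_three]
  ring

lemma isSymm_inv {M : Matrix (Fin 3) (Fin 3) ℝ} (hMs : M.IsSymm) : M⁻¹.IsSymm := by
  unfold Matrix.IsSymm
  rw [Matrix.transpose_nonsing_inv, hMs]

lemma mulVec_inv_cancel {M : Matrix (Fin 3) (Fin 3) ℝ} (hM : M.PosDef) (v : Fin 3 → ℝ) :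
    M *ᵥ (M⁻¹ *ᵥ v) = v := by
  rw [Matrix.mulVec_mulVec, Matrix.mul_nonsing_inv _ hM.det_pos.ne'.isUnit, Matrix.one_mulVec]

lemma Qf_inv_eq {M : Matrix (Fin 3) (Fin 3) ℝ} (hM : M.PosDef) (v : Fin 3 → ℝ) :
    Qf M⁻¹ v = Qf M (M⁻¹ *ᵥ v) := by
  rw [Qf_eq_dot, Qf_eq_dot, mulVec_inv_cancel hM, dotProduct_comm]

lemma dot_eq (M : Matrix (Fin 3) (Fin 3) ℝ) (hM : M.PosDef) (v w : Fin 3 → ℝ) :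
    Bf M w (M⁻¹ *ᵥ v) = dotProduct w v := by
  rw [Bf_eq_dot, mulVec_inv_cancel hM]

/-- completing the square: `2⟨w,v⟩ - Q_M(w) ≤ Q_{M⁻¹}(v)` -/
lemma le_Qf_inv {M : Matrix (Fin 3) (Fin 3) ℝ} (hM : M.PosDef) (hMs : M.IsSymm)
    (v w : Fin 3 → ℝ) : 2 * dotProduct w v - Qf M w ≤ Qf M⁻¹ v := by
  set z := M⁻¹ *ᵥ v with hz
  have h0 : 0 ≤ Qf M ((1:ℝ) • w - (1:ℝ) • z) := Qf_nonneg hM _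
  rw [Qf_expand hMs] at h0
  have hb : Bf M w z = dotProduct w v := dot_eq M hM v w
  have hq : Qf M⁻¹ v = Qf M z := Qf_inv_eq hM v
  nlinarith [h0]

/-- inverse comparison: if `Q_B ≤ Λ² Q_A` then `Q_{A⁻¹} ≤ Λ² Q_{B⁻¹}`. -/
lemma Qf_inv_le {A B : Matrix (Fin 3) (Fin 3) ℝ} (hA : A.PosDef) (hAs : A.IsSymm)
    (hB : B.PosDef) (hBs : B.IsSymm) {Λ : ℝ} (hΛ : 0 < Λ)
    (h : ∀ v, Qf B v ≤ Λ^2 * Qf A v) (v : Fin 3 → ℝ) :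
    Qf A⁻¹ v ≤ Λ^2 * Qf B⁻¹ v := by
  set z := A⁻¹ *ᵥ v with hzdef
  have h1 : Qf A⁻¹ v = 2 * dotProduct z v - Qf A z := by
    have hb : Bf A z z = dotProduct z v := dot_eq A hA v z
    rw [Bf_self] at hb
    rw [Qf_inv_eq hA, ← hzdef, ← hb]; ring
  have h2 : 2 * dotProduct ((Λ^2)⁻¹ • z) v - Qf B ((Λ^2)⁻¹ • z) ≤ Qf B⁻¹ v :=
    le_Qf_inv hB hBs v _
  have h3 : dotProduct ((Λ^2)⁻¹ • z) v = (Λ^2)⁻¹ * dotProduct z v := by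
    simp [smul_dotProduct]
  have h4 : Qf B ((Λ^2)⁻¹ • z) = ((Λ^2)⁻¹)^2 * Qf B z := Qf_smul B z _
  have h5 : Qf B z ≤ Λ^2 * Qf A z := h z
  have hΛ2 : (0:ℝ) < Λ^2 := by positivity
  rw [h3, h4] at h2
  rw [h1]
  have := mul_le_mul_of_nonneg_left h2 (le_of_lt hΛ2)
  have e1 : Λ^2 * (2 * ((Λ^2)⁻¹ * dotProduct z v) - ((Λ^2)⁻¹)^2 * Qf B z)
      = 2 * dotProduct z v - (Λ^2)⁻¹ * Qf B z := by
    field_simp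
  have e2 : (Λ^2)⁻¹ * Qf B z ≤ Qf A z := by
    rw [inv_mul_le_iff₀ hΛ2]; exact h5
  linarith [this, e1.symm.le]

/-- 2×2 Gram determinant comparison. -/
lemma gram_comp {A B : Matrix (Fin 3) (Fin 3) ℝ} (hA : A.PosDef) (hAs : A.IsSymm)
    (hB : B.PosDef) (hBs : B.IsSymm) {Λ : ℝ} (hΛ : 0 < Λ)
    (h : ∀ v, Qf A v ≤ Λ^2 * Qf B v) (u w : Fin 3 → ℝ) :
    Qf A u * Qf A w - (Bf A u w)^2 ≤ Λ^4 * (Qf B u * Qf B w - (Bf B u w)^2) := by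
  rcases eq_or_ne w 0 with rfl | hw
  · simp [Bf, Qf]
  · have hq : 0 < Qf B w := Qf_pos hB hw
    set t := Bf B u w / Qf B w with ht
    set u' := (1:ℝ) • u - t • w with hu'
    have hQA : Qf A u' = Qf A u - 2*t*Bf A u w + t^2 * Qf A w := by
      rw [hu', Qf_expand hAs]; ring
    have hQB : Qf B u' = Qf B u - 2*t*Bf B u w + t^2 * Qf B w := by
      rw [hu', Qf_expand hBs]; ring
    have hBA : Bf A u' w = Bf A u w - t * Qf A w := by
      rw [hu', Bf_sub_smul, Bf_self]; ring
    have hBB : Bf B u' w = 0 := by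
      rw [hu', Bf_sub_smul, Bf_self, ht]
      field_simp; ring
    have id1 : Qf A u * Qf A w - (Bf A u w)^2 = Qf A u' * Qf A w - (Bf A u' w)^2 := by
      rw [hQA, hBA]; ring
    have id2 : Qf B u * Qf B w - (Bf B u w)^2 = Qf B u' * Qf B w := by
      have e : Bf B u' w = Bf B u w - t * Qf B w := by
        rw [hu', Bf_sub_smul, Bf_self]; ring
      have h0 : Bf B u w - t * Qf B w = 0 := e.symm.trans hBB
      rw [hQB]; nlinarith [h0]
    rw [id1, id2]
    have s1 : Qf A u' * Qf A w - (Bf A u' w)^2 ≤ Qf A u' * Qf A w :=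
      sub_le_self _ (sq_nonneg _)
    have s2 : Qf A u' * Qf A w ≤ (Λ^2 * Qf B u') * (Λ^2 * Qf B w) :=
      mul_le_mul (h u') (h w) (Qf_nonneg hA w) (mul_nonneg (by positivity) (Qf_nonneg hB u'))
    calc Qf A u' * Qf A w - (Bf A u' w)^2 ≤ (Λ^2 * Qf B u') * (Λ^2 * Qf B w) :=
          le_trans s1 s2
      _ = Λ^4 * (Qf B u' * Qf B w) := by ring

/-- cross product on `Fin 3 → ℝ` -/
def cr (u w : Fin 3 → ℝ) : Fin 3 → ℝ :=
  ![u 1 * w 2 - u 2 * w 1, u 2 * w 0 - u 0 * w 2, u 0 * w 1 - u 1 * w 0]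

/-- adjugate quadratic form on a cross product equals the 2×2 Gram determinant. -/
lemma Qf_adjugate_cross {A : Matrix (Fin 3) (Fin 3) ℝ} (hAs : A.IsSymm) (u w : Fin 3 → ℝ) :
    Qf (Matrix.adjugate A) (cr u w) = Qf A u * Qf A w - (Bf A u w)^2 := by
  have h : ∀ i j, A i j = A j i := fun i j => by
    conv_lhs => rw [← hAs]
    rfl
  simp only [Qf, Bf, Fin.sum_univ_three, cr, Matrix.adjugate_fin_three,
    Matrix.cons_val', Matrix.cons_val_zero, Matrix.cons_val_one, Matrix.head_cons,
    Matrix.empty_val', Matrix.cons_val_fin_one, Matrix.head_fin_const, Matrix.cons_val_two,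
    Matrix.tail_cons, Matrix.of_apply, h 1 0, h 2 0, h 2 1]
  ring

lemma cr_surj (v : Fin 3 → ℝ) : ∃ u w, cr u w = v := by
  rcases eq_or_ne v 0 with rfl | hv
  · exact ⟨0, 0, by funext i; fin_cases i <;> simp [cr]⟩
  · have key : ∀ u : Fin 3 → ℝ, u ≠ 0 → u 0 * v 0 + u 1 * v 1 + u 2 * v 2 = 0 →
        ∃ u' w, cr u' w = v := by
      intro u hu hdot
      have hS : 0 < u 0 ^ 2 + u 1 ^ 2 + u 2 ^ 2 := by
        by_contra hcon
        push_neg at hcon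
        have h0 : u 0 = 0 := by nlinarith [sq_nonneg (u 0), sq_nonneg (u 1), sq_nonneg (u 2)]
        have h1 : u 1 = 0 := by nlinarith [sq_nonneg (u 0), sq_nonneg (u 1), sq_nonneg (u 2)]
        have h2 : u 2 = 0 := by nlinarith [sq_nonneg (u 0), sq_nonneg (u 1), sq_nonneg (u 2)]
        refine hu (funext fun i => ?_)
        fin_cases i
        · exact h0
        · exact h1
        · exact h2
      set S := u 0 ^ 2 + u 1 ^ 2 + u 2 ^ 2 with hSdef
      have hSne : S ≠ 0 := ne_of_gt hS
      refine ⟨u, (1/S) • cr v u, ?_⟩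
      have hc0 : cr u ((1/S) • cr v u) 0 = (1/S) * (S * v 0 - (u 0 * v 0 + u 1 * v 1 + u 2 * v 2) * u 0) := by
        simp only [cr, Pi.smul_apply, smul_eq_mul, Matrix.cons_val_zero, Matrix.cons_val_one,
          Matrix.head_cons, Matrix.cons_val_two, Matrix.tail_cons, hSdef]
        ring
      have hc1 : cr u ((1/S) • cr v u) 1 = (1/S) * (S * v 1 - (u 0 * v 0 + u 1 * v 1 + u 2 * v 2) * u 1) := by
        simp only [cr, Pi.smul_apply, smul_eq_mul, Matrix.cons_val_zero, Matrix.cons_val_one,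
          Matrix.head_cons, Matrix.cons_val_two, Matrix.tail_cons, hSdef]
        ring
      have hc2 : cr u ((1/S) • cr v u) 2 = (1/S) * (S * v 2 - (u 0 * v 0 + u 1 * v 1 + u 2 * v 2) * u 2) := by
        simp only [cr, Pi.smul_apply, smul_eq_mul, Matrix.cons_val_zero, Matrix.cons_val_one,
          Matrix.head_cons, Matrix.cons_val_two, Matrix.tail_cons, hSdef]
        ring
      funext i
      fin_cases i
      · show cr u ((1/S) • cr v u) 0 = v 0
        rw [hc0, hdot]; field_simp; ring
      · show cr u ((1/S) • cr v u) 1 = v 1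
        rw [hc1, hdot]; field_simp; ring
      · show cr u ((1/S) • cr v u) 2 = v 2
        rw [hc2, hdot]; field_simp; ring
    by_cases hall : v 0 = v 1 ∧ v 1 = v 2
    · refine key ![1, -1, 0] ?_ ?_
      · intro h
        have := congrFun h 0
        simp at this
      · simp only [Matrix.cons_val_zero, Matrix.cons_val_one, Matrix.head_cons,
          Matrix.cons_val_two, Matrix.tail_cons]
        rw [hall.1]; ring
    · refine key ![v 1 - v 2, v 2 - v 0, v 0 - v 1] ?_ ?_
      · intro h
        apply hall
        have h0 := congrFun h 0
        have h1 := congrFun h 1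
        have h2 := congrFun h 2
        simp only [Matrix.cons_val_zero, Matrix.cons_val_one, Matrix.head_cons,
          Matrix.cons_val_two, Matrix.tail_cons, Pi.zero_apply] at h0 h1 h2
        constructor <;> linarith
      · simp only [Matrix.cons_val_zero, Matrix.cons_val_one, Matrix.head_cons,
          Matrix.cons_val_two, Matrix.tail_cons]
        ring

/-- 3×3 Gram determinant -/
def D3 (M : Matrix (Fin 3) (Fin 3) ℝ) (a b c : Fin 3 → ℝ) : ℝ :=
  Qf M a * (Qf M b * Qf M c - Bf M b c ^ 2)
    - Bf M a b * (Bf M a b * Qf M c - Bf M b c * Bf M a c)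
    + Bf M a c * (Bf M a b * Bf M b c - Qf M b * Bf M a c)

lemma Bf_right_lin (M : Matrix (Fin 3) (Fin 3) ℝ) (z c a b : Fin 3 → ℝ) (s r : ℝ) :
    Bf M z (c - s • a - r • b) = Bf M z c - s * Bf M z a - r * Bf M z b := by
  simp only [Bf, Fin.sum_univ_three, Pi.sub_apply, Pi.smul_apply, smul_eq_mul]; ring

lemma Bf_left_lin (M : Matrix (Fin 3) (Fin 3) ℝ) (z c a b : Fin 3 → ℝ) (s r : ℝ) :
    Bf M (c - s • a - r • b) z = Bf M c z - s * Bf M a z - r * Bf M b z := by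
  simp only [Bf, Fin.sum_univ_three, Pi.sub_apply, Pi.smul_apply, smul_eq_mul]; ring

lemma Qf_expand2 {M : Matrix (Fin 3) (Fin 3) ℝ} (hM : M.IsSymm) (c a b : Fin 3 → ℝ) (s r : ℝ) :
    Qf M (c - s • a - r • b) = Qf M c - 2*s*Bf M c a - 2*r*Bf M c b
      + s^2 * Qf M a + r^2 * Qf M b + 2*s*r*Bf M a b := by
  have h : ∀ i j, M i j = M j i := fun i j => by
    conv_lhs => rw [← hM]
    rfl
  simp only [Qf, Bf, Fin.sum_univ_three, Pi.sub_apply, Pi.smul_apply, smul_eq_mul,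
    h 1 0, h 2 0, h 2 1]
  ring

/-- shear invariance of the Gram determinant, second slot -/
lemma D3_shear2 {M : Matrix (Fin 3) (Fin 3) ℝ} (hM : M.IsSymm) (a b c : Fin 3 → ℝ) (t : ℝ) :
    D3 M a (b - t • a - (0:ℝ) • c) c = D3 M a b c := by
  have hs := Bf_symm hM
  simp only [D3, Bf_right_lin, Bf_left_lin, Qf_expand2 hM, Bf_self]
  simp only [hs b a, hs c a, hs c b]
  ring

/-- shear invariance of the Gram determinant, third slot -/
lemma D3_shear3 {M : Matrix (Fin 3) (Fin 3) ℝ} (hM : M.IsSymm) (a b c : Fin 3 → ℝ) (s r : ℝ) :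
    D3 M a b (c - s • a - r • b) = D3 M a b c := by
  have hs := Bf_symm hM
  simp only [D3, Bf_right_lin, Bf_left_lin, Qf_expand2 hM, Bf_self]
  simp only [hs b a, hs c a, hs c b]
  ring

/-- Hadamard-type inequality for the Gram determinant -/
lemma D3_le_prod {M : Matrix (Fin 3) (Fin 3) ℝ} (hM : M.PosDef) (hMs : M.IsSymm)
    (a b c : Fin 3 → ℝ) (ha : 0 < Qf M a) :
    D3 M a b c ≤ Qf M a * Qf M b * Qf M c := by
  have m1 := Bf_sq_le hM hMs a b
  have m2 := Bf_sq_le hM hMs a c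
  have m3 := Bf_sq_le hM hMs b c
  have hb : 0 ≤ Qf M b := Qf_nonneg hM b
  have hc : 0 ≤ Qf M c := Qf_nonneg hM c
  unfold D3
  nlinarith [sq_nonneg (Qf M a * Bf M b c - Bf M a b * Bf M a c),
    mul_nonneg (sq_nonneg (Bf M a c)) (sub_nonneg.2 m1),
    mul_nonneg (mul_nonneg hb hc) ha.le, sq_nonneg (Bf M b c),
    mul_nonneg (sq_nonneg (Bf M a b)) (sub_nonneg.2 m2)]

def e0 : Fin 3 → ℝ := ![1,0,0]
def e1 : Fin 3 → ℝ := ![0,1,0]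
def e2 : Fin 3 → ℝ := ![0,0,1]

lemma D3_basis {M : Matrix (Fin 3) (Fin 3) ℝ} (hM : M.IsSymm) : D3 M e0 e1 e2 = M.det := by
  have h : ∀ i j, M i j = M j i := fun i j => by
    conv_lhs => rw [← hM]
    rfl
  simp only [D3, Qf, Bf, Fin.sum_univ_three, e0, e1, e2, Matrix.cons_val_zero,
    Matrix.cons_val_one, Matrix.head_cons, Matrix.cons_val_two, Matrix.tail_cons,
    Matrix.det_fin_three, h 1 0, h 2 0, h 2 1]
  ring

/-- the determinant comparison -/
lemma det_comp {A B : Matrix (Fin 3) (Fin 3) ℝ} (hA : A.PosDef) (hAs : A.IsSymm)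
    (hB : B.PosDef) (hBs : B.IsSymm) {Λ : ℝ} (hΛ : 0 < Λ)
    (h : ∀ v, Qf A v ≤ Λ^2 * Qf B v) : A.det ≤ Λ^6 * B.det := by
  have he0 : e0 ≠ 0 := fun hc => by simpa [e0] using congrFun hc 0
  have hq0 : 0 < Qf B e0 := Qf_pos hB he0
  set t : ℝ := Bf B e1 e0 / Qf B e0 with ht
  set c1 : Fin 3 → ℝ := e1 - t • e0 - (0:ℝ) • e2 with hc1
  have hc1ne : c1 ≠ 0 := fun hc => by
    have := congrFun hc 1
    simp [hc1, e0, e1, e2, Pi.sub_apply] at this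
  have hq1 : 0 < Qf B c1 := Qf_pos hB hc1ne
  set s : ℝ := Bf B e2 e0 / Qf B e0 with hs'
  set r : ℝ := Bf B e2 c1 / Qf B c1 with hr
  set c2 : Fin 3 → ℝ := e2 - s • e0 - r • c1 with hc2
  -- orthogonality
  have o10 : Bf B c1 e0 = 0 := by
    rw [hc1, Bf_left_lin, Bf_self, ht]
    field_simp; ring
  have o20 : Bf B c2 e0 = 0 := by
    rw [hc2, Bf_left_lin, Bf_self, o10, hs']
    field_simp; ring
  have o21 : Bf B c2 c1 = 0 := by
    rw [hc2, Bf_left_lin, Bf_self, Bf_symm hBs e0 c1, o10, hr]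
    field_simp; ring
  -- D3 invariance
  have inv1 : ∀ N : Matrix (Fin 3) (Fin 3) ℝ, N.IsSymm → D3 N e0 c1 c2 = D3 N e0 e1 e2 := by
    intro N hN
    rw [hc2, D3_shear3 hN, hc1, D3_shear2 hN]
  -- B-Gram is diagonal
  have hDB : D3 B e0 c1 c2 = Qf B e0 * Qf B c1 * Qf B c2 := by
    rw [D3, Bf_symm hBs e0 c1, o10, Bf_symm hBs e0 c2, o20, Bf_symm hBs c1 c2, o21]
    ring
  have hQBc2 : 0 ≤ Qf B c2 := Qf_nonneg hB _
  have step1 : A.det = D3 A e0 c1 c2 := by rw [inv1 A hAs, D3_basis hAs]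
  have step2 : D3 A e0 c1 c2 ≤ Qf A e0 * Qf A c1 * Qf A c2 :=
    D3_le_prod hA hAs _ _ _ (Qf_pos hA he0)
  have step3 : Qf A e0 * Qf A c1 * Qf A c2 ≤ (Λ^2 * Qf B e0) * (Λ^2 * Qf B c1) * (Λ^2 * Qf B c2) := by
    have n1 := Qf_nonneg hA e0
    have n2 := Qf_nonneg hA c1
    have n3 := Qf_nonneg hA c2
    have l1 := h e0
    have l2 := h c1
    have l3 := h c2
    have p0 : (0:ℝ) ≤ Λ^2 * Qf B e0 := mul_nonneg (by positivity) hq0.le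
    have p1 : (0:ℝ) ≤ Λ^2 * Qf B c1 := mul_nonneg (by positivity) hq1.le
    have m12 : Qf A e0 * Qf A c1 ≤ (Λ^2 * Qf B e0) * (Λ^2 * Qf B c1) :=
      mul_le_mul l1 l2 n2 p0
    exact mul_le_mul m12 l3 n3 (mul_nonneg p0 p1)
  have step4 : (Λ^2 * Qf B e0) * (Λ^2 * Qf B c1) * (Λ^2 * Qf B c2) = Λ^6 * B.det := by
    rw [← D3_basis hBs, ← inv1 B hBs, hDB]; ring
  linarith [step1, step2, step3, step4.symm.le]

lemma Qf_smul_mat (c : ℝ) (M : Matrix (Fin 3) (Fin 3) ℝ) (v : Fin 3 → ℝ) :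
    Qf (c • M) v = c * Qf M v := by
  simp only [Qf, Matrix.smul_apply, smul_eq_mul, Fin.sum_univ_three]; ring

/-- pointwise volume-density comparison -/
lemma sqrt_det_comp {A B : Matrix (Fin 3) (Fin 3) ℝ} (hA : A.PosDef) (hAs : A.IsSymm)
    (hB : B.PosDef) (hBs : B.IsSymm) {Λ : ℝ} (hΛ : 0 < Λ)
    (h : ∀ v, Qf A v ≤ Λ^2 * Qf B v) :
    Real.sqrt A.det ≤ Λ^3 * Real.sqrt B.det := by
  have hd := det_comp hA hAs hB hBs hΛ h
  calc Real.sqrt A.det ≤ Real.sqrt (Λ^6 * B.det) := Real.sqrt_le_sqrt hd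
    _ = Λ^3 * Real.sqrt B.det := by
        rw [show Λ^6 = (Λ^3)^2 by ring, Real.sqrt_mul (sq_nonneg _),
          Real.sqrt_sq (by positivity)]

/-- pointwise conductivity comparison -/
lemma sigma_comp {A B : Matrix (Fin 3) (Fin 3) ℝ} (hA : A.PosDef) (hAs : A.IsSymm)
    (hB : B.PosDef) (hBs : B.IsSymm) {Λ : ℝ} (hΛ : 0 < Λ)
    (hAB : ∀ v, Qf A v ≤ Λ^2 * Qf B v) (hBA : ∀ v, Qf B v ≤ Λ^2 * Qf A v)
    (v : Fin 3 → ℝ) :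
    Qf A⁻¹ v * Real.sqrt A.det ≤ Λ^3 * (Qf B⁻¹ v * Real.sqrt B.det) := by
  have hdA : 0 < A.det := hA.det_pos
  have hdB : 0 < B.det := hB.det_pos
  have hp : 0 ≤ Qf A⁻¹ v := Qf_nonneg hA.inv v
  have hq : 0 ≤ Qf B⁻¹ v := Qf_nonneg hB.inv v
  have ha : Qf A⁻¹ v ≤ Λ^2 * Qf B⁻¹ v := Qf_inv_le hA hAs hB hBs hΛ hBA v
  have adjA : A.det * Qf A⁻¹ v = Qf (Matrix.adjugate A) v := by
    rw [Matrix.inv_def, Qf_smul_mat]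
    rw [Ring.inverse_eq_inv']
    field_simp
  have adjB : B.det * Qf B⁻¹ v = Qf (Matrix.adjugate B) v := by
    rw [Matrix.inv_def, Qf_smul_mat]
    rw [Ring.inverse_eq_inv']
    field_simp
  have hadj : Qf (Matrix.adjugate A) v ≤ Λ^4 * Qf (Matrix.adjugate B) v := by
    obtain ⟨u, w, huw⟩ := cr_surj v
    rw [← huw, Qf_adjugate_cross hAs, Qf_adjugate_cross hBs]
    exact gram_comp hA hAs hB hBs hΛ hAB u w
  have hb : A.det * Qf A⁻¹ v ≤ Λ^4 * (B.det * Qf B⁻¹ v) := by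
    rw [adjA, adjB]; exact hadj
  have key : (Qf A⁻¹ v)^2 * A.det ≤ Λ^6 * (Qf B⁻¹ v)^2 * B.det := by
    have hm := mul_le_mul ha hb (mul_nonneg hdA.le hp)
      (mul_nonneg (by positivity) hq)
    nlinarith [hm]
  have lhs_nonneg : 0 ≤ Qf A⁻¹ v * Real.sqrt A.det := mul_nonneg hp (Real.sqrt_nonneg _)
  have rhs_nonneg : 0 ≤ Λ^3 * (Qf B⁻¹ v * Real.sqrt B.det) :=
    mul_nonneg (by positivity) (mul_nonneg hq (Real.sqrt_nonneg _))
  have sq_eq1 : (Qf A⁻¹ v * Real.sqrt A.det)^2 = (Qf A⁻¹ v)^2 * A.det := by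
    rw [mul_pow, Real.sq_sqrt hdA.le]
  have sq_eq2 : (Λ^3 * (Qf B⁻¹ v * Real.sqrt B.det))^2 = Λ^6 * (Qf B⁻¹ v)^2 * B.det := by
    rw [mul_pow, mul_pow, Real.sq_sqrt hdB.le]; ring
  have := Real.sqrt_le_sqrt (le_trans sq_eq1.le (le_trans key sq_eq2.symm.le))
  rwa [Real.sqrt_sq lhs_nonneg, Real.sqrt_sq rhs_nonneg] at this

end Core

section Analysis
open Matrix MeasureTheory

variable {g : E3 → Matrix (Fin 3) (Fin 3) ℝ}

lemma cont_sqrt_det (hcont : ∀ i j, Continuous fun x => g x i j) :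
    Continuous fun x => Real.sqrt (g x).det :=
  Real.continuous_sqrt.comp (continuous_matrix hcont).matrix_det

lemma cont_inv_elem (hcont : ∀ i j, Continuous fun x => g x i j)
    (hpos : ∀ x, (g x).PosDef) (i j : Fin 3) :
    Continuous fun x => (g x)⁻¹ i j := by
  have hgc : Continuous fun x => g x := continuous_matrix hcont
  have hinv : Continuous fun x => (g x)⁻¹ := by
    have : (fun x => (g x)⁻¹) = fun x => ((g x).det)⁻¹ • (g x).adjugate := by
      funext x
      rw [Matrix.inv_def, Ring.inverse_eq_inv']
    rw [this]
    exact (hgc.matrix_det.inv₀ fun x => (hpos x).det_pos.ne').smul hgc.matrix_adjugate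
  exact hinv.matrix_elem i j

lemma meas_pd (ψ : E3 → ℝ) (i : Fin 3) : Measurable fun x => pd ψ i x :=
  measurable_fderiv_apply_const (𝕜 := ℝ) (f := ψ) (EuclideanSpace.single i 1)

/-- the energy integrand -/
def eInt (g : E3 → Matrix (Fin 3) (Fin 3) ℝ) (ψ : E3 → ℝ) (x : E3) : ℝ :=
  Qf (g x)⁻¹ (fun i => pd ψ i x) * Real.sqrt (g x).det

lemma gEnergyOn_eq (g : E3 → Matrix (Fin 3) (Fin 3) ℝ) (ψ : E3 → ℝ) :
    gEnergyOn Set.univ g ψ = (1 / (4 * π)) * ∫ x, eInt g ψ x := by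
  rw [gEnergyOn, Measure.restrict_univ]
  rfl

lemma meas_eInt (hcont : ∀ i j, Continuous fun x => g x i j)
    (hpos : ∀ x, (g x).PosDef) (ψ : E3 → ℝ) : Measurable (eInt g ψ) := by
  apply Measurable.mul
  · apply Finset.measurable_sum
    intro i _
    apply Finset.measurable_sum
    intro j _
    exact ((cont_inv_elem hcont hpos i j).measurable.mul (meas_pd ψ i)).mul (meas_pd ψ j)
  · exact (cont_sqrt_det hcont).measurable

lemma eInt_nonneg (hpos : ∀ x, (g x).PosDef) (ψ : E3 → ℝ) (x : E3) : 0 ≤ eInt g ψ x :=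
  mul_nonneg (Qf_nonneg (hpos x).inv _) (Real.sqrt_nonneg _)

lemma energy_nonneg (hpos : ∀ x, (g x).PosDef) (ψ : E3 → ℝ) :
    0 ≤ gEnergyOn Set.univ g ψ := by
  rw [gEnergyOn_eq]
  have : (0:ℝ) < 4 * π := by positivity
  exact mul_nonneg (by positivity) (integral_nonneg (eInt_nonneg hpos ψ))

/-- comparison of energies -/
lemma energy_comp {g₁ g₂ : E3 → Matrix (Fin 3) (Fin 3) ℝ}
    (hcont₁ : ∀ i j, Continuous fun x => g₁ x i j)
    (hcont₂ : ∀ i j, Continuous fun x => g₂ x i j)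
    (hsym₁ : ∀ x, (g₁ x).IsSymm) (hpos₁ : ∀ x, (g₁ x).PosDef)
    (hsym₂ : ∀ x, (g₂ x).IsSymm) (hpos₂ : ∀ x, (g₂ x).PosDef)
    {Λ : ℝ} (hΛ : 0 < Λ)
    (hAB : ∀ x v, Qf (g₁ x) v ≤ Λ^2 * Qf (g₂ x) v)
    (hBA : ∀ x v, Qf (g₂ x) v ≤ Λ^2 * Qf (g₁ x) v)
    (ψ : E3 → ℝ) :
    gEnergyOn Set.univ g₁ ψ ≤ Λ^3 * gEnergyOn Set.univ g₂ ψ := by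
  have h12 : ∀ x, eInt g₁ ψ x ≤ Λ^3 * eInt g₂ ψ x := fun x =>
    sigma_comp (hpos₁ x) (hsym₁ x) (hpos₂ x) (hsym₂ x) hΛ (hAB x) (hBA x) _
  have h21 : ∀ x, eInt g₂ ψ x ≤ Λ^3 * eInt g₁ ψ x := fun x =>
    sigma_comp (hpos₂ x) (hsym₂ x) (hpos₁ x) (hsym₁ x) hΛ (hBA x) (hAB x) _
  have hn1 := eInt_nonneg hpos₁ ψ
  have hn2 := eInt_nonneg hpos₂ ψ
  have hm1 := meas_eInt hcont₁ hpos₁ ψ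
  have hm2 := meas_eInt hcont₂ hpos₂ ψ
  rw [gEnergyOn_eq, gEnergyOn_eq]
  have hc : (0:ℝ) ≤ 1 / (4 * π) := by positivity
  by_cases hint : Integrable (eInt g₂ ψ) volume
  · have hint1 : Integrable (eInt g₁ ψ) volume := by
      apply (hint.const_mul (Λ^3)).mono' hm1.aestronglyMeasurable
      filter_upwards with x
      rw [Real.norm_eq_abs, abs_of_nonneg (hn1 x)]
      exact h12 x
    have : ∫ x, eInt g₁ ψ x ≤ ∫ x, Λ^3 * eInt g₂ ψ x :=
      integral_mono hint1 (hint.const_mul _) h12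
    rw [integral_const_mul] at this
    calc (1 / (4 * π)) * ∫ x, eInt g₁ ψ x ≤ (1 / (4 * π)) * (Λ^3 * ∫ x, eInt g₂ ψ x) :=
          mul_le_mul_of_nonneg_left this hc
      _ = Λ^3 * ((1 / (4 * π)) * ∫ x, eInt g₂ ψ x) := by ring
  · have hint1 : ¬ Integrable (eInt g₁ ψ) volume := by
      intro h1
      apply hint
      apply (h1.const_mul (Λ^3)).mono' hm2.aestronglyMeasurable
      filter_upwards with x
      rw [Real.norm_eq_abs, abs_of_nonneg (hn2 x)]
      exact h21 x
    rw [integral_undef hint, integral_undef hint1]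
    simp

/-- comparison of infima -/
lemma sInf_comp {S₁ S₂ : Set ℝ} {c : ℝ} (hc : 0 < c) (h0 : ∀ e ∈ S₁, 0 ≤ e)
    (hne : S₁.Nonempty → S₂.Nonempty)
    (key : ∀ e ∈ S₂, ∃ e' ∈ S₁, e' ≤ c * e) : sInf S₁ ≤ c * sInf S₂ := by
  by_cases h : S₂.Nonempty
  · have hbdd : BddBelow S₁ := ⟨0, h0⟩
    have hlb : ∀ e ∈ S₂, sInf S₁ / c ≤ e := by
      intro e he
      obtain ⟨e', he', hle⟩ := key e he
      have := csInf_le hbdd he'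
      rw [div_le_iff₀ hc]
      calc sInf S₁ ≤ e' := this
        _ ≤ c * e := hle
        _ = e * c := mul_comm _ _
    have := le_csInf h hlb
    rw [div_le_iff₀ hc] at this
    calc sInf S₁ ≤ sInf S₂ * c := this
      _ = c * sInf S₂ := mul_comm _ _
  · have h1 : ¬ S₁.Nonempty := fun hn => h (hne hn)
    rw [Set.not_nonempty_iff_eq_empty] at h h1
    rw [h, h1, Real.sInf_empty, mul_zero]

lemma inv_cube_le {Λ a b : ℝ} (hΛ : 0 < Λ) (h : a ≤ Λ^3 * b) : Λ⁻¹^3 * a ≤ b := by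
  have h2 := mul_le_mul_of_nonneg_left h (by positivity : (0:ℝ) ≤ Λ⁻¹^3)
  calc Λ⁻¹^3 * a ≤ Λ⁻¹^3 * (Λ^3 * b) := h2
    _ = b := by field_simp

lemma gVol_comp {g₁ g₂ : E3 → Matrix (Fin 3) (Fin 3) ℝ}
    (hcont₁ : ∀ i j, Continuous fun x => g₁ x i j)
    (hcont₂ : ∀ i j, Continuous fun x => g₂ x i j)
    (hsym₁ : ∀ x, (g₁ x).IsSymm) (hpos₁ : ∀ x, (g₁ x).PosDef)
    (hsym₂ : ∀ x, (g₂ x).IsSymm) (hpos₂ : ∀ x, (g₂ x).PosDef)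
    {Λ : ℝ} (hΛ : 0 < Λ)
    (hAB : ∀ x v, Qf (g₁ x) v ≤ Λ^2 * Qf (g₂ x) v)
    {K : Set E3} (hK : IsCompact K) : gVol g₁ K ≤ Λ^3 * gVol g₂ K := by
  have hc1 := cont_sqrt_det hcont₁
  have hc2 := cont_sqrt_det hcont₂
  have hi1 : IntegrableOn (fun x => Real.sqrt (g₁ x).det) K volume :=
    hc1.continuousOn.integrableOn_compact hK
  have hi2 : IntegrableOn (fun x => Real.sqrt (g₂ x).det) K volume :=
    hc2.continuousOn.integrableOn_compact hK
  unfold gVol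
  calc (∫ x in K, Real.sqrt (g₁ x).det)
      ≤ ∫ x in K, Λ^3 * Real.sqrt (g₂ x).det :=
        setIntegral_mono_on hi1 (hi2.const_mul _) hK.measurableSet
          (fun x _ => sqrt_det_comp (hpos₁ x) (hsym₁ x) (hpos₂ x) (hsym₂ x) hΛ (hAB x))
    _ = Λ^3 * ∫ x in K, Real.sqrt (g₂ x).det := integral_const_mul _ _

lemma gCap_comp {g₁ g₂ : E3 → Matrix (Fin 3) (Fin 3) ℝ}
    (hcont₁ : ∀ i j, Continuous fun x => g₁ x i j)
    (hcont₂ : ∀ i j, Continuous fun x => g₂ x i j)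
    (hsym₁ : ∀ x, (g₁ x).IsSymm) (hpos₁ : ∀ x, (g₁ x).PosDef)
    (hsym₂ : ∀ x, (g₂ x).IsSymm) (hpos₂ : ∀ x, (g₂ x).PosDef)
    {Λ : ℝ} (hΛ : 0 < Λ)
    (hAB : ∀ x v, Qf (g₁ x) v ≤ Λ^2 * Qf (g₂ x) v)
    (hBA : ∀ x v, Qf (g₂ x) v ≤ Λ^2 * Qf (g₁ x) v)
    (K : Set E3) : gCap g₁ K ≤ Λ^3 * gCap g₂ K := by
  unfold gCap gCapOn
  apply sInf_comp (by positivity : (0:ℝ) < Λ^3)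
  · rintro e ⟨ψ, hψ, h0, ht, rfl⟩
    exact energy_nonneg hpos₁ ψ
  · rintro ⟨e, ψ, hψ, h0, ht, rfl⟩
    exact ⟨_, ψ, hψ, h0, ht, rfl⟩
  · rintro e ⟨ψ, hψ, h0, ht, rfl⟩
    exact ⟨_, ⟨ψ, hψ, h0, ht, rfl⟩,
      energy_comp hcont₁ hcont₂ hsym₁ hpos₁ hsym₂ hpos₂ hΛ hAB hBA ψ⟩

end Analysis


/-- **Volume and capacity comparison for uniformly equivalent metrics.** If
`Λ⁻² g₂ ≤ g₁ ≤ Λ² g₂` as quadratic forms pointwise, then for every compact `K`,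
`Λ⁻³|K|_{g₂} ≤ |K|_{g₁} ≤ Λ³|K|_{g₂}` and `Λ⁻³ cap_{g₂}(K) ≤ cap_{g₁}(K) ≤ Λ³ cap_{g₂}(K)`. -/
theorem uniformly_equivalent_vol_cap
    (g₁ g₂ : E3 → Matrix (Fin 3) (Fin 3) ℝ)
    (hcont₁ : ∀ i j, Continuous fun x => g₁ x i j)
    (hcont₂ : ∀ i j, Continuous fun x => g₂ x i j)
    (hsym₁ : ∀ x, (g₁ x).IsSymm) (hpos₁ : ∀ x, (g₁ x).PosDef)
    (hsym₂ : ∀ x, (g₂ x).IsSymm) (hpos₂ : ∀ x, (g₂ x).PosDef)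
    (Λ : ℝ) (hΛ : 1 ≤ Λ)
    (hequiv : ∀ (x : E3) (v : Fin 3 → ℝ),
      Λ⁻¹ ^ 2 * (∑ i, ∑ j, g₂ x i j * v i * v j) ≤ ∑ i, ∑ j, g₁ x i j * v i * v j ∧
      ∑ i, ∑ j, g₁ x i j * v i * v j ≤ Λ ^ 2 * ∑ i, ∑ j, g₂ x i j * v i * v j)
    (K : Set E3) (hK : IsCompact K) :
    (Λ⁻¹ ^ 3 * gVol g₂ K ≤ gVol g₁ K ∧ gVol g₁ K ≤ Λ ^ 3 * gVol g₂ K) ∧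
    (Λ⁻¹ ^ 3 * gCap g₂ K ≤ gCap g₁ K ∧ gCap g₁ K ≤ Λ ^ 3 * gCap g₂ K) := by
  have hΛ0 : (0:ℝ) < Λ := lt_of_lt_of_le one_pos hΛ
  have hAB : ∀ x v, Qf (g₁ x) v ≤ Λ^2 * Qf (g₂ x) v := fun x v => (hequiv x v).2
  have hBA : ∀ x v, Qf (g₂ x) v ≤ Λ^2 * Qf (g₁ x) v := by
    intro x v
    have h1 : Λ⁻¹ ^ 2 * Qf (g₂ x) v ≤ Qf (g₁ x) v := (hequiv x v).1
    have e : Λ^2 * (Λ⁻¹^2 * Qf (g₂ x) v) = Qf (g₂ x) v := by field_simp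
    calc Qf (g₂ x) v = Λ^2 * (Λ⁻¹^2 * Qf (g₂ x) v) := e.symm
      _ ≤ Λ^2 * Qf (g₁ x) v := mul_le_mul_of_nonneg_left h1 (by positivity)
  refine ⟨⟨?_, ?_⟩, ?_, ?_⟩
  · exact inv_cube_le hΛ0
      (gVol_comp hcont₂ hcont₁ hsym₂ hpos₂ hsym₁ hpos₁ hΛ0 hBA hK)
  · exact gVol_comp hcont₁ hcont₂ hsym₁ hpos₁ hsym₂ hpos₂ hΛ0 hAB hK
  · exact inv_cube_le hΛ0
      (gCap_comp hcont₂ hcont₁ hsym₂ hpos₂ hsym₁ hpos₁ hΛ0 hBA hAB K)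
  · exact gCap_comp hcont₁ hcont₂ hsym₁ hpos₁ hsym₂ hpos₂ hΛ0 hAB hBA K
end
end

section
/- There exists a universal constant γ > 0 with the following property. For every m > 0 and every s ≥ m/2, let A(s) = 4π s² (1 + m/(2s))⁴ and V(s) = ∫_{{x ∈ ℝ³ : m/2 ≤ |x| ≤ s}} (1 + m/(2|x|))⁶ dx. Then (2/A(s)) ( V(s) − A(s)^{3/2}/(6√π) ) ≤ m + γ m² / √(A(s)). -/
noncomputable section

open MeasureTheory Filter Topology Real

lemma ball_vol : (volume (Metric.ball (0:E3) 1)).toReal = 4 * π / 3 := by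
  rw [EuclideanSpace.volume_ball]
  have h1 : Real.Gamma ((Fintype.card (Fin 3)) / 2 + 1) = 3/4 * Real.sqrt π := by
    have : ((Fintype.card (Fin 3) : ℝ)) / 2 + 1 = 3/2 + 1 := by norm_num
    rw [this, Real.Gamma_add_one (by norm_num), show (3:ℝ)/2 = 1/2 + 1 by norm_num,
      Real.Gamma_add_one (by norm_num), Real.Gamma_one_half_eq]
    ring
  rw [h1]
  have hπ : 0 < Real.sqrt π := Real.sqrt_pos.2 pi_pos
  have h2 : Real.sqrt π ^ (Fintype.card (Fin 3)) / (3/4 * Real.sqrt π) = 4 * π / 3 := by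
    have : Real.sqrt π ^ 2 = π := Real.sq_sqrt pi_pos.le
    simp only [Fintype.card_fin]
    field_simp
    nlinarith [this]
  rw [h2]
  simp [ENNReal.toReal_ofReal (by positivity : (0:ℝ) ≤ 4 * π / 3)]

lemma radial_int (m s : ℝ) (hm : 0 < m) (hs : m/2 ≤ s) :
    ∫ y in Set.Icc (m/2) s, (y^2 + 3*m*y + 15*m^2)
      ≤ s^3/3 + 3/2*m*s^2 + 15*m^2*s := by
  have heq : ∫ y in Set.Icc (m/2) s, (y^2 + 3*m*y + 15*m^2)
      = (s^3/3 - (m/2)^3/3) + 3*m/2*(s^2 - (m/2)^2) + 15*m^2*(s - m/2) := by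
    rw [MeasureTheory.integral_Icc_eq_integral_Ioc, ← intervalIntegral.integral_of_le hs]
    have h1 : IntervalIntegrable (fun y : ℝ => y^2) volume (m/2) s := by
      apply Continuous.intervalIntegrable; continuity
    have h2 : IntervalIntegrable (fun y : ℝ => 3*m*y) volume (m/2) s := by
      apply Continuous.intervalIntegrable; continuity
    have h3 : IntervalIntegrable (fun y : ℝ => 15*m^2) volume (m/2) s := by
      apply Continuous.intervalIntegrable; continuity
    rw [intervalIntegral.integral_add (h1.add h2) h3, intervalIntegral.integral_add h1 h2]
    rw [intervalIntegral.integral_const_mul]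
    simp [integral_pow, integral_id]
    ring
  rw [heq]; nlinarith [sq_nonneg m, sq_nonneg (m/2), pow_pos hm 3, hm.le]

lemma vol_bound (m s : ℝ) (hm : 0 < m) (hs : m/2 ≤ s) :
    (∫ x in {x : E3 | m / 2 ≤ ‖x‖ ∧ ‖x‖ ≤ s}, (1 + m / (2 * ‖x‖)) ^ 6)
      ≤ 4*π*(s^3/3 + 3/2*m*s^2 + 15*m^2*s) := by
  have hm2 : 0 < m/2 := by linarith
  set S : Set E3 := {x : E3 | m / 2 ≤ ‖x‖ ∧ ‖x‖ ≤ s} with hS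
  have hSeq : S = (fun x : E3 => ‖x‖) ⁻¹' (Set.Icc (m/2) s) := by
    ext x; simp [hS, Set.mem_Icc]
  have hclosed : IsClosed S := by
    rw [hSeq]; exact isClosed_Icc.preimage continuous_norm
  have hbdd : Bornology.IsBounded S := by
    apply Bornology.IsBounded.subset (Metric.isBounded_closedBall (x := (0:E3)) (r := s))
    intro x hx; simpa [Metric.mem_closedBall] using hx.2
  have hcompact : IsCompact S := Metric.isCompact_of_isClosed_isBounded hclosed hbdd
  have hmeas : MeasurableSet S := hclosed.measurableSet
  have hnorm_pos : ∀ x ∈ S, (0:ℝ) < ‖x‖ := fun x hx => lt_of_lt_of_le hm2 hx.1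
  -- continuity of the two integrands on S
  have hcf : ContinuousOn (fun x : E3 => (1 + m / (2 * ‖x‖)) ^ 6) S := by
    apply ContinuousOn.pow
    apply ContinuousOn.add continuousOn_const
    exact continuousOn_const.div (continuousOn_const.mul continuous_norm.continuousOn)
      (fun x hx => by have := hnorm_pos x hx; positivity)
  have hcg : ContinuousOn (fun x : E3 => 1 + 3*m/‖x‖ + 15*m^2/‖x‖^2) S := by
    apply ContinuousOn.add
    · exact continuousOn_const.add (continuousOn_const.div continuous_norm.continuousOn
        (fun x hx => (hnorm_pos x hx).ne'))
    · exact continuousOn_const.div (continuous_norm.continuousOn.pow 2)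
        (fun x hx => by have := hnorm_pos x hx; positivity)
  have hif : IntegrableOn (fun x : E3 => (1 + m / (2 * ‖x‖)) ^ 6) S volume :=
    hcf.integrableOn_compact hcompact
  have hig : IntegrableOn (fun x : E3 => 1 + 3*m/‖x‖ + 15*m^2/‖x‖^2) S volume :=
    hcg.integrableOn_compact hcompact
  -- pointwise bound
  have hpt : ∀ x ∈ S, (1 + m / (2 * ‖x‖)) ^ 6 ≤ 1 + 3*m/‖x‖ + 15*m^2/‖x‖^2 := by
    intro x hx
    set r := ‖x‖ with hr
    have hrpos : 0 < r := hnorm_pos x hx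
    set t := m / (2*r) with htdef
    have htpos : 0 < t := by positivity
    have htle : t ≤ 1 := by
      rw [htdef, div_le_one (by positivity)]
      have := hx.1; linarith
    have hmt : m = 2*r*t := by rw [htdef]; field_simp
    have h2 : 3*m/r = 6*t := by rw [hmt]; field_simp; ring
    have h3 : 15*m^2/r^2 = 60*t^2 := by rw [hmt]; field_simp; ring
    rw [h2, h3]
    nlinarith [sq_nonneg t, sq_nonneg (1-t), pow_pos htpos 3, pow_pos htpos 4]
  have step1 := setIntegral_mono_on hif hig hmeas hpt
  refine step1.trans ?_
  -- spherical coordinates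
  set G : ℝ → ℝ := Set.indicator (Set.Icc (m/2) s) (fun r => 1 + 3*m/r + 15*m^2/r^2) with hG
  have hind : ∫ x in S, (1 + 3*m/‖x‖ + 15*m^2/‖x‖^2) = ∫ x : E3, G ‖x‖ := by
    rw [← integral_indicator hmeas]
    refine integral_congr_ae (Filter.Eventually.of_forall fun x => ?_)
    simp only [hG, Set.indicator_apply]
    have : x ∈ S ↔ ‖x‖ ∈ Set.Icc (m/2) s := by simp [hS, Set.mem_Icc]
    by_cases hx : x ∈ S
    · rw [if_pos hx, if_pos (this.1 hx)]
    · rw [if_neg hx, if_neg (fun h => hx (this.2 h))]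
  rw [hind, integral_fun_norm_addHaar volume G]
  have hdim : Module.finrank ℝ E3 = 3 := finrank_euclideanSpace_fin
  rw [hdim, measureReal_def, ball_vol]
  have hax : (fun y : ℝ => y ^ (3-1) • G y)
      = Set.indicator (Set.Icc (m/2) s) (fun y => y^2 * (1 + 3*m/y + 15*m^2/y^2)) := by
    funext y
    simp only [hG, Set.indicator_apply, smul_eq_mul]
    by_cases hy : y ∈ Set.Icc (m/2) s
    · rw [if_pos hy, if_pos hy]
    · rw [if_neg hy, if_neg hy, mul_zero]
  have hsub : Set.Icc (m/2) s ⊆ Set.Ioi (0:ℝ) := fun y hy => lt_of_lt_of_le hm2 hy.1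
  have hx2 : ∫ y in Set.Ioi (0:ℝ), y ^ (3-1) • G y
      = ∫ y in Set.Icc (m/2) s, (y^2 + 3*m*y + 15*m^2) := by
    rw [hax, setIntegral_indicator measurableSet_Icc,
      Set.inter_eq_self_of_subset_right hsub]
    refine setIntegral_congr_fun measurableSet_Icc (fun y hy => ?_)
    have hypos : (0:ℝ) < y := lt_of_lt_of_le hm2 hy.1
    field_simp
  rw [hx2]
  have := radial_int m s hm hs
  have h4π : (0:ℝ) < 4 * π / 3 := by positivity
  calc 3 • (4 * π / 3) • ∫ y in Set.Icc (m/2) s, (y^2 + 3*m*y + 15*m^2)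
      = (4 * π) * ∫ y in Set.Icc (m/2) s, (y^2 + 3*m*y + 15*m^2) := by
        rw [nsmul_eq_mul, smul_eq_mul]; ring
    _ ≤ (4 * π) * (s^3/3 + 3/2*m*s^2 + 15*m^2*s) := by
        apply mul_le_mul_of_nonneg_left this (by positivity)

/-- **Uniform isoperimetric deficit bound for Schwarzschild coordinate balls.** There is a
universal constant `γ > 0` such that for all `m > 0` and `s ≥ m/2`, with
`A(s) = 4πs²(1+m/(2s))⁴` the area of the coordinate sphere and
`V(s) = ∫_{m/2 ≤ |x| ≤ s} (1+m/(2|x|))⁶ dx` the volume between the horizon and that sphere,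
`(2/A(s))(V(s) − A(s)^{3/2}/(6√π)) ≤ m + γm²/√(A(s))`. -/
theorem schwarzschild_isoperimetric_deficit :
    ∃ γ > (0 : ℝ), ∀ m : ℝ, 0 < m → ∀ s : ℝ, m / 2 ≤ s →
      (2 / (4 * π * s ^ 2 * (1 + m / (2 * s)) ^ 4)) *
        ((∫ x in {x : E3 | m / 2 ≤ ‖x‖ ∧ ‖x‖ ≤ s}, (1 + m / (2 * ‖x‖)) ^ 6)
          - (4 * π * s ^ 2 * (1 + m / (2 * s)) ^ 4) ^ ((3 : ℝ) / 2) / (6 * Real.sqrt π))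
      ≤ m + γ * m ^ 2 / Real.sqrt (4 * π * s ^ 2 * (1 + m / (2 * s)) ^ 4) := by
  refine ⟨120, by norm_num, ?_⟩
  intro m hm s hs
  have hs0 : 0 < s := lt_of_lt_of_le (by linarith) hs
  set u : ℝ := 1 + m / (2 * s) with hu
  clear_value u
  have hu1 : 1 ≤ u := by
    have : 0 ≤ m / (2 * s) := by positivity
    linarith
  have hu0 : 0 < u := by linarith
  set A : ℝ := 4 * π * s ^ 2 * u ^ 4 with hA
  clear_value A
  have hA0 : 0 < A := by rw [hA]; positivity
  have hπ0 : 0 < Real.sqrt π := Real.sqrt_pos.2 pi_pos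
  have hsq : Real.sqrt π ^ 2 = π := Real.sq_sqrt pi_pos.le
  have hπ2 : Real.sqrt π ≤ 2 := by nlinarith [Real.sqrt_nonneg π, pi_le_four]
  have hsqrtA : Real.sqrt A = 2 * Real.sqrt π * s * u ^ 2 := by
    have h : A = (2 * Real.sqrt π * s * u ^ 2) ^ 2 := by
      rw [hA]; linear_combination (-4*s^2*u^4) * hsq
    rw [h, Real.sqrt_sq (by positivity)]
  have hA32 : A ^ ((3:ℝ)/2) / (6 * Real.sqrt π) = 4 * π / 3 * s ^ 3 * u ^ 6 := by
    have h1 : A ^ ((3:ℝ)/2) = Real.sqrt A ^ (3:ℕ) := by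
      rw [show ((3:ℝ)/2) = (1/2) * (3:ℕ) by norm_num, Real.rpow_mul hA0.le,
        ← Real.sqrt_eq_rpow, Real.rpow_natCast]
    rw [h1, hsqrtA]
    field_simp
    linear_combination 24 * hsq
  set V : ℝ := ∫ x in {x : E3 | m / 2 ≤ ‖x‖ ∧ ‖x‖ ≤ s}, (1 + m / (2 * ‖x‖)) ^ 6 with hV
  clear_value V
  have hVb : V ≤ 4*π*(s^3/3 + 3/2*m*s^2 + 15*m^2*s) := by rw [hV]; exact vol_bound m s hm hs
  have hu6 : 1 + 3*m/s ≤ u ^ 6 := by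
    have h := one_add_mul_le_pow (a := m / (2*s))
      (le_trans (by norm_num : (-2:ℝ) ≤ 0) (by positivity)) 6
    have h2 : 1 + 3*m/s = 1 + (6:ℕ) * (m / (2*s)) := by field_simp; ring
    rw [h2, hu]; exact_mod_cast h
  have key : V - A ^ ((3:ℝ)/2) / (6 * Real.sqrt π) ≤ 4*π*(1/2*m*s^2 + 15*m^2*s) := by
    rw [hA32]
    have hss : s^3 * (3*m/s) = 3*m*s^2 := by field_simp
    nlinarith [mul_le_mul_of_nonneg_left hu6 (by positivity : (0:ℝ) ≤ 4*π/3*s^3), hss]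
  have step2 : (2/A) * (V - A ^ ((3:ℝ)/2) / (6 * Real.sqrt π))
      ≤ m / u^4 + 30*m^2 / (s * u^4) := by
    calc (2/A) * (V - A ^ ((3:ℝ)/2) / (6 * Real.sqrt π))
        ≤ (2/A) * (4*π*(1/2*m*s^2 + 15*m^2*s)) :=
          mul_le_mul_of_nonneg_left key (by positivity)
      _ = m / u^4 + 30*m^2 / (s * u^4) := by
          rw [hA]; field_simp; ring
  refine step2.trans ?_
  have t1 : m / u^4 ≤ m := div_le_self hm.le (one_le_pow₀ hu1)
  have t2 : 30*m^2 / (s * u^4) ≤ 120 * m^2 / Real.sqrt A := by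
    rw [hsqrtA, div_le_div_iff₀ (by positivity) (by positivity)]
    have hu24 : u^2 ≤ u^4 := pow_le_pow_right₀ hu1 (by norm_num)
    calc 30*m^2 * (2*Real.sqrt π*s*u^2) = Real.sqrt π * (60*m^2*s*u^2) := by ring
      _ ≤ 2 * (60*m^2*s*u^2) := mul_le_mul_of_nonneg_right hπ2 (by positivity)
      _ = 120*m^2 * (s*u^2) := by ring
      _ ≤ 120*m^2 * (s*u^4) := by
          apply mul_le_mul_of_nonneg_left (mul_le_mul_of_nonneg_left hu24 hs0.le) (by positivity)
  linarith
end
end
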